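/- Let A and B be groups and let G = A × B be their direct product. Let ψ : G → ℤ be a group homomorphism, and suppose there exist a₀ ∈ A and b₀ ∈ B such that ψ(a₀, 1) = 1 and ψ(1, b₀) = 1. Then the commutator subgroup of G equals the commutator subgroup of K = ker ψ, i.e. ⁅G,G⁆ = ⁅K,K⁆. -/

import Mathlib

open scoped commutatorElement

/-- Let `A`, `B` be groups and `G = A × B`. Let `ψ : G → ℤ` be a group
homomorphism (with `ℤ` viewed multiplicatively as `Multiplicative ℤ`), and suppose there
exist `a₀ ∈ A`, `b₀ ∈ B` with `ψ (a₀, 1) = 1` and `ψ (1, b₀) = 1`. Then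
`⁅G, G⁆ = ⁅K, K⁆` where `K = ker ψ`. -/
theorem commutator_eq_of_direct_product
    {A B : Type*} [Group A] [Group B]
    (ψ : A × B →* Multiplicative ℤ) (a₀ : A) (b₀ : B)
    (ha : ψ (a₀, 1) = Multiplicative.ofAdd 1)
    (hb : ψ (1, b₀) = Multiplicative.ofAdd 1) :
    commutator (A × B) = ⁅ψ.ker, ψ.ker⁆ := by
  have hkerA : ∀ a : A, ((a, b₀ ^ (-Multiplicative.toAdd (ψ (a, 1)))) : A × B) ∈ ψ.ker := by
    intro a
    have : ((a, b₀ ^ (-Multiplicative.toAdd (ψ (a, 1)))) : A × B)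
        = (a, 1) * ((1 : A), b₀) ^ (-Multiplicative.toAdd (ψ (a, 1))) := by
      simp [Prod.ext_iff]
    rw [MonoidHom.mem_ker, this, map_mul, map_zpow, hb]
    rw [← ofAdd_toAdd (ψ (a, 1)), ← ofAdd_zsmul, ← ofAdd_add]
    simp
  have hkerB : ∀ b : B, ((a₀ ^ (-Multiplicative.toAdd (ψ (1, b))), b) : A × B) ∈ ψ.ker := by
    intro b
    have : ((a₀ ^ (-Multiplicative.toAdd (ψ (1, b))), b) : A × B)
        = ((1 : A), b) * (a₀, (1 : B)) ^ (-Multiplicative.toAdd (ψ (1, b))) := by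
      simp [Prod.ext_iff]
    rw [MonoidHom.mem_ker, this, map_mul, map_zpow, ha]
    rw [← ofAdd_toAdd (ψ (1, b)), ← ofAdd_zsmul, ← ofAdd_add]
    simp
  have hA : ∀ a a' : A, ((⁅a, a'⁆, (1 : B)) : A × B) ∈ ⁅ψ.ker, ψ.ker⁆ := by
    intro a a'
    have h := Subgroup.commutator_mem_commutator (hkerA a) (hkerA a')
    have heq : ⁅((a, b₀ ^ (-Multiplicative.toAdd (ψ (a, 1)))) : A × B),
        ((a', b₀ ^ (-Multiplicative.toAdd (ψ (a', 1)))) : A × B)⁆ = (⁅a, a'⁆, (1 : B)) := by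
      simp [commutatorElement_def, Prod.ext_iff]
      group
    rwa [heq] at h
  have hB : ∀ b b' : B, (((1 : A), ⁅b, b'⁆) : A × B) ∈ ⁅ψ.ker, ψ.ker⁆ := by
    intro b b'
    have h := Subgroup.commutator_mem_commutator (hkerB b) (hkerB b')
    have heq : ⁅((a₀ ^ (-Multiplicative.toAdd (ψ (1, b))), b) : A × B),
        ((a₀ ^ (-Multiplicative.toAdd (ψ (1, b'))), b') : A × B)⁆ = ((1 : A), ⁅b, b'⁆) := by
      simp [commutatorElement_def, Prod.ext_iff]
      group
    rwa [heq] at h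
  refine le_antisymm ?_ (Subgroup.commutator_mono le_top le_top)
  rw [commutator_def, Subgroup.commutator_le]
  intro g _ h _
  have : ⁅g, h⁆ = ((⁅g.1, h.1⁆, (1 : B)) : A × B) * ((1 : A), ⁅g.2, h.2⁆) := by
    simp [commutatorElement_def, Prod.ext_iff]
  rw [this]
  exact mul_mem (hA _ _) (hB _ _)
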